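/- Let M be a set and let (v_n) be a sequence of symmetric reflexive relations on M with v_0 = M × M and v_{n+1} ∘ v_{n+1} ∘ v_{n+1} ⊆ v_n for all n. Let δ be the maximal pseudometric on M such that δ(x,y) ≤ 2^{-n} whenever (x,y) ∈ v_n. Then for every n > 0, δ(x,y) < 2^{-n} implies (x,y) ∈ v_{n-1}. -/

import Mathlib

open Uniformity
open scoped SetRel

namespace FrinkAux

variable {M : Type*}

/-- `FrinkChain v x l` : `l` is a list of links `(nᵢ, xᵢ₊₁)` forming a chain starting at `x`,
with consecutive pairs in `v nᵢ`. -/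
def FrinkChain (v : ℕ → Set (M × M)) : M → List (ℕ × M) → Prop
  | _, [] => True
  | x, (n, y) :: l => (x, y) ∈ v n ∧ FrinkChain v y l

/-- Endpoint of a chain. -/
def frinkLast : M → List (ℕ × M) → M
  | x, [] => x
  | _, (_, y) :: l => frinkLast y l

/-- Sum of weights `(1/2)^nᵢ` of a chain. -/
noncomputable def frinkSum (l : List (ℕ × M)) : ℝ := (l.map fun p => (1 / 2 : ℝ) ^ p.1).sum

@[simp] lemma frinkChain_nil (v : ℕ → Set (M × M)) (x : M) : FrinkChain v x [] := trivial

@[simp] lemma frinkChain_cons (v : ℕ → Set (M × M)) (x y : M) (n : ℕ) (l : List (ℕ × M)) :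
    FrinkChain v x ((n, y) :: l) ↔ (x, y) ∈ v n ∧ FrinkChain v y l := Iff.rfl

@[simp] lemma frinkLast_nil (x : M) : frinkLast x ([] : List (ℕ × M)) = x := rfl

@[simp] lemma frinkLast_cons (x y : M) (n : ℕ) (l : List (ℕ × M)) :
    frinkLast x ((n, y) :: l) = frinkLast y l := rfl

@[simp] lemma frinkSum_nil : frinkSum ([] : List (ℕ × M)) = 0 := rfl

@[simp] lemma frinkSum_cons (n : ℕ) (y : M) (l : List (ℕ × M)) :
    frinkSum ((n, y) :: l) = (1 / 2 : ℝ) ^ n + frinkSum l := by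
  simp [frinkSum]

lemma frinkSum_append (l₁ l₂ : List (ℕ × M)) :
    frinkSum (l₁ ++ l₂) = frinkSum l₁ + frinkSum l₂ := by
  simp [frinkSum]

lemma frinkSum_nonneg (l : List (ℕ × M)) : 0 ≤ frinkSum l := by
  induction l with
  | nil => simp
  | cons p l ih => cases p with | mk n y => simp only [frinkSum_cons]; positivity

lemma frinkLast_append (x : M) (l₁ l₂ : List (ℕ × M)) :
    frinkLast x (l₁ ++ l₂) = frinkLast (frinkLast x l₁) l₂ := by
  induction l₁ generalizing x with
  | nil => rfl
  | cons p l ih => cases p with | mk n y => simp [ih]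

lemma frinkChain_append {v : ℕ → Set (M × M)} {x : M} {l₁ l₂ : List (ℕ × M)}
    (h₁ : FrinkChain v x l₁) (h₂ : FrinkChain v (frinkLast x l₁) l₂) :
    FrinkChain v x (l₁ ++ l₂) := by
  induction l₁ generalizing x with
  | nil => simpa using h₂
  | cons p l ih =>
      cases p with
      | mk n y =>
        exact ⟨h₁.1, ih h₁.2 (by simpa using h₂)⟩

lemma frinkChain_append_iff {v : ℕ → Set (M × M)} {x : M} {l₁ l₂ : List (ℕ × M)} :
    FrinkChain v x (l₁ ++ l₂) ↔ FrinkChain v x l₁ ∧ FrinkChain v (frinkLast x l₁) l₂ := by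
  induction l₁ generalizing x with
  | nil => simp
  | cons p l ih =>
      cases p with
      | mk n y => simp [ih, and_assoc]

/-- Reversal of a chain, using symmetry of the relations. -/
lemma frinkChain_reverse {v : ℕ → Set (M × M)}
    (hsymm : ∀ n, ∀ p ∈ v n, Prod.swap p ∈ v n)
    {x : M} {l : List (ℕ × M)} (h : FrinkChain v x l) :
    ∃ l' : List (ℕ × M), FrinkChain v (frinkLast x l) l' ∧
      frinkLast (frinkLast x l) l' = x ∧ frinkSum l' = frinkSum l := by
  induction l generalizing x with
  | nil => exact ⟨[], trivial, rfl, rfl⟩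
  | cons p l ih =>
      cases p with
      | mk n y =>
        obtain ⟨l', hc, hl, hs⟩ := ih h.2
        refine ⟨l' ++ [(n, x)], ?_, ?_, ?_⟩
        · rw [frinkLast_cons]
          exact frinkChain_append hc (by rw [hl]; exact ⟨hsymm n _ h.1, trivial⟩)
        · rw [frinkLast_cons, frinkLast_append, hl]; rfl
        · rw [frinkSum_append, hs]; simp [frinkSum]; ring



lemma v_succ_subset {v : ℕ → Set (M × M)}
    (hrefl : ∀ n, SetRel.id ⊆ v n)
    (hcomp : ∀ n, (v (n + 1)) ○ (v (n + 1)) ○ (v (n + 1)) ⊆ v n)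
    (n : ℕ) : v (n + 1) ⊆ v n := by
  rintro ⟨a, b⟩ h
  exact hcomp n ⟨b, ⟨b, h, hrefl (n+1) rfl⟩, hrefl (n+1) rfl⟩

lemma v_antitone {v : ℕ → Set (M × M)}
    (hrefl : ∀ n, SetRel.id ⊆ v n)
    (hcomp : ∀ n, (v (n + 1)) ○ (v (n + 1)) ○ (v (n + 1)) ⊆ v n)
    {m n : ℕ} (h : m ≤ n) : v n ⊆ v m := by
  induction n with
  | zero => simp [Nat.le_zero.mp h]
  | succ n ih =>
      rcases Nat.lt_or_ge m (n+1) with h' | h'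
      · exact (v_succ_subset hrefl hcomp n).trans (ih (Nat.lt_succ_iff.mp h'))
      · have : m = n + 1 := le_antisymm h h'
        simp [this]

open Classical in
lemma frink_chain_mem {v : ℕ → Set (M × M)}
    (hrefl : ∀ n, SetRel.id ⊆ v n)
    (hcomp : ∀ n, (v (n + 1)) ○ (v (n + 1)) ○ (v (n + 1)) ⊆ v n) :
    ∀ (k : ℕ) (l : List (ℕ × M)), l.length ≤ k → ∀ (x : M) (n : ℕ),
      FrinkChain v x l → frinkSum l < (1 / 2 : ℝ) ^ (n + 1) → (x, frinkLast x l) ∈ v n := by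
  intro k
  induction k with
  | zero =>
      intro l hl x n _ _
      have : l = [] := List.length_eq_zero_iff.mp (Nat.le_zero.mp hl)
      subst this
      exact hrefl n rfl
  | succ k ih =>
      intro L hl x n hc hs
      rcases L with _ | ⟨p, t⟩
      · exact hrefl n rfl
      set L : List (ℕ × M) := p :: t with hL
      have hlen : 0 < L.length := by simp [hL]
      set S : ℝ := frinkSum L with hSdef
      have hSpos : 0 < S := by
        rcases p with ⟨n₀, y₀⟩
        have h1 : (0:ℝ) < (1/2:ℝ)^n₀ := by positivity
        have h2 := frinkSum_nonneg (M := M) t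
        rw [hSdef, hL, frinkSum_cons]
        linarith
      set P : ℕ → ℝ := fun j => frinkSum (L.take j) with hP
      have hQex : ∃ j, S / 2 < P (j + 1) := by
        refine ⟨L.length - 1, ?_⟩
        have : L.length - 1 + 1 = L.length := Nat.succ_pred_eq_of_pos hlen
        rw [hP]
        simp only [this, List.take_length]
        linarith
      set j := Nat.find hQex with hj
      have hjspec : S / 2 < P (j + 1) := Nat.find_spec hQex
      have hjle : j ≤ L.length - 1 := Nat.find_min' hQex (by
        have : L.length - 1 + 1 = L.length := Nat.succ_pred_eq_of_pos hlen
        simp only [hP, this, List.take_length]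
        linarith)
      have hjlt : j < L.length := lt_of_le_of_lt hjle (Nat.sub_lt hlen one_pos)
      have hPj : P j ≤ S / 2 := by
        rcases Nat.eq_zero_or_pos j with h0 | h0
        · simp only [h0, hP, List.take_zero, frinkSum_nil]; linarith
        · have := Nat.find_min hQex (Nat.sub_lt h0 one_pos)
          have heq : j - 1 + 1 = j := Nat.succ_pred_eq_of_pos h0
          rw [heq] at this
          exact not_lt.mp this
      rcases hq : L[j]'hjlt with ⟨m, z⟩
      have hLsplit : L = L.take j ++ (m, z) :: L.drop (j + 1) := by
        conv_lhs => rw [← List.take_append_drop j L]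
        rw [List.drop_eq_getElem_cons hjlt, hq]
      set A := L.take j with hA
      set B := L.drop (j + 1) with hB
      -- chain decomposition
      have hc2 : FrinkChain v x (A ++ (m, z) :: B) := by rw [← hLsplit]; exact hc
      rw [frinkChain_append_iff] at hc2
      obtain ⟨hcA, hmid, hcB⟩ := hc2
      set xj := frinkLast x A with hxj
      -- sum decomposition
      have hsum : S = frinkSum A + ((1 / 2 : ℝ) ^ m + frinkSum B) := by
        conv_lhs => rw [hSdef, hLsplit]
        rw [frinkSum_append, frinkSum_cons]
      have hsum2 : S = P (j + 1) + frinkSum B := by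
        conv_lhs => rw [hSdef, ← List.take_append_drop (j + 1) L]
        rw [frinkSum_append]
      have hbnd : S / 2 < (1 / 2 : ℝ) ^ (n + 2) := by
        have h2 : ((1:ℝ)/2) ^ (n + 2) = (1/2) ^ (n + 1) / 2 := by ring
        linarith
      have hAnn := frinkSum_nonneg (M := M) A
      have hBnn := frinkSum_nonneg (M := M) B
      -- prefix
      have hAlen : A.length ≤ k := by
        have : A.length = j := by
          rw [hA, List.length_take]; exact min_eq_left hjlt.le
        rw [this]
        have := Nat.le_sub_one_of_lt hjlt
        omega
      have h1 : (x, xj) ∈ v (n + 1) :=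
        ih A hAlen x (n + 1) hcA (lt_of_le_of_lt hPj hbnd)
      -- suffix
      have hBlen : B.length ≤ k := by
        rw [hB, List.length_drop]
        omega
      have hBsum : frinkSum B < (1 / 2 : ℝ) ^ (n + 2) := by linarith
      have h3 : (z, frinkLast z B) ∈ v (n + 1) := ih B hBlen z (n + 1) hcB hBsum
      -- middle
      have h2 : (xj, z) ∈ v (n + 1) := by
        have hm : (1 / 2 : ℝ) ^ m < (1 / 2 : ℝ) ^ (n + 1) := by linarith
        have : n + 1 < m := by
          have := (pow_lt_pow_iff_right_of_lt_one₀ (by norm_num : (0:ℝ) < 1/2)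
            (by norm_num : (1:ℝ)/2 < 1)).mp hm
          exact this
        exact v_antitone hrefl hcomp this.le hmid
      have hend : frinkLast x L = frinkLast z B := by
        conv_lhs => rw [hLsplit]
        rw [frinkLast_append, ← hxj, frinkLast_cons]
      rw [hend]
      exact hcomp n ⟨z, ⟨xj, h1, h2⟩, h3⟩

end FrinkAux

open Uniformity FrinkAux in
theorem FrinkAux.frink_lemma' {M : Type*} (v : ℕ → Set (M × M))
    (hv0 : v 0 = Set.univ)
    (hrefl : ∀ n, SetRel.id ⊆ v n)
    (hsymm : ∀ n, ∀ p ∈ v n, Prod.swap p ∈ v n)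
    (hcomp : ∀ n, (v (n + 1)) ○ (v (n + 1)) ○ (v (n + 1)) ⊆ v n)
    (δ : M → M → ℝ)
    (hδ0 : ∀ x, δ x x = 0)
    (hδsymm : ∀ x y, δ x y = δ y x)
    (hδtri : ∀ x y z, δ x z ≤ δ x y + δ y z)
    (hδnonneg : ∀ x y, 0 ≤ δ x y)
    (hδle : ∀ n, ∀ p ∈ v n, δ p.1 p.2 ≤ (1 / 2 : ℝ) ^ n)
    (hδmax : ∀ ρ : M → M → ℝ, (∀ x, ρ x x = 0) → (∀ x y, ρ x y = ρ y x) →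
      (∀ x y z, ρ x z ≤ ρ x y + ρ y z) → (∀ x y, 0 ≤ ρ x y) →
      (∀ n, ∀ p ∈ v n, ρ p.1 p.2 ≤ (1 / 2 : ℝ) ^ n) → ∀ x y, ρ x y ≤ δ x y) :
    ∀ n, 0 < n → ∀ x y : M, δ x y < (1 / 2 : ℝ) ^ n → (x, y) ∈ v (n - 1) := by
  -- the chain pseudometric
  set D : M → M → Set ℝ := fun x y =>
    {s | ∃ l : List (ℕ × M), FrinkChain v x l ∧ frinkLast x l = y ∧ frinkSum l = s} with hD
  have hDne : ∀ x y, (D x y).Nonempty := by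
    intro x y
    refine ⟨1, [(0, y)], ⟨?_, trivial⟩, rfl, by simp⟩
    rw [hv0]; trivial
  have hDbdd : ∀ x y, BddBelow (D x y) := by
    rintro x y
    refine ⟨0, ?_⟩
    rintro s ⟨l, -, -, rfl⟩
    exact frinkSum_nonneg l
  set ρ : M → M → ℝ := fun x y => sInf (D x y) with hρ
  have hρnonneg : ∀ x y, 0 ≤ ρ x y := by
    intro x y
    refine le_csInf (hDne x y) ?_
    rintro s ⟨l, -, -, rfl⟩
    exact frinkSum_nonneg l
  have hρ0 : ∀ x, ρ x x = 0 := fun x =>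
    le_antisymm (csInf_le (hDbdd x x) ⟨[], trivial, rfl, rfl⟩) (hρnonneg x x)
  have hDsub : ∀ x y, D x y ⊆ D y x := by
    rintro x y s ⟨l, hc, hlast, rfl⟩
    obtain ⟨l', hc', hl', hs'⟩ := frinkChain_reverse hsymm hc
    rw [hlast] at hc' hl'
    exact ⟨l', hc', hl', hs'⟩
  have hρsymm : ∀ x y, ρ x y = ρ y x := by
    intro x y
    have : D x y = D y x := le_antisymm (hDsub x y) (hDsub y x)
    simp only [hρ, this]
  have hρtri : ∀ x y z, ρ x z ≤ ρ x y + ρ y z := by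
    intro x y z
    refine le_of_forall_pos_le_add ?_
    intro ε hε
    obtain ⟨s, hsD, hslt⟩ := exists_lt_of_csInf_lt (hDne x y)
      (show ρ x y < ρ x y + ε / 2 by linarith)
    obtain ⟨t, htD, htlt⟩ := exists_lt_of_csInf_lt (hDne y z)
      (show ρ y z < ρ y z + ε / 2 by linarith)
    obtain ⟨l₁, hc₁, hl₁, rfl⟩ := hsD
    obtain ⟨l₂, hc₂, hl₂, rfl⟩ := htD
    have hmem : frinkSum l₁ + frinkSum l₂ ∈ D x z := by
      refine ⟨l₁ ++ l₂, frinkChain_append hc₁ (by rw [hl₁]; exact hc₂), ?_, frinkSum_append _ _⟩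
      rw [frinkLast_append, hl₁, hl₂]
    have := csInf_le (hDbdd x z) hmem
    linarith
  have hρle : ∀ n, ∀ p ∈ v n, ρ p.1 p.2 ≤ (1 / 2 : ℝ) ^ n := by
    intro n p hp
    refine le_trans (csInf_le (hDbdd _ _) ⟨[(n, p.2)], ⟨?_, trivial⟩, rfl, rfl⟩) (by simp)
    simpa using hp
  have hρδ := hδmax ρ hρ0 hρsymm hρtri hρnonneg hρle
  intro n hn x y hxy
  have hρlt : ρ x y < (1 / 2 : ℝ) ^ n := lt_of_le_of_lt (hρδ x y) hxy
  obtain ⟨s, ⟨l, hc, hlast, rfl⟩, hslt⟩ := exists_lt_of_csInf_lt (hDne x y) hρlt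
  have hn' : n - 1 + 1 = n := Nat.succ_pred_eq_of_pos hn
  have := frink_chain_mem hrefl hcomp l.length l le_rfl x (n - 1) hc (by rw [hn']; exact hslt)
  rwa [hlast] at this


/-- **Frink's Lemma.** Given a Frink sequence `v` of symmetric reflexive relations on `M`
(`v 0 = univ`, `v (n+1) ∘ v (n+1) ∘ v (n+1) ⊆ v n`), and `δ` the maximal pseudometric with
`δ ≤ 2⁻ⁿ` on `v n`, then `δ x y < 2⁻ⁿ` implies `(x, y) ∈ v (n-1)` for `n > 0`. -/
theorem frink_lemma {M : Type*} (v : ℕ → Set (M × M))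
    (hv0 : v 0 = Set.univ)
    (hrefl : ∀ n, SetRel.id ⊆ v n)
    (hsymm : ∀ n, ∀ p ∈ v n, Prod.swap p ∈ v n)
    (hcomp : ∀ n, (v (n + 1)) ○ (v (n + 1)) ○ (v (n + 1)) ⊆ v n)
    (δ : M → M → ℝ)
    (hδ0 : ∀ x, δ x x = 0)
    (hδsymm : ∀ x y, δ x y = δ y x)
    (hδtri : ∀ x y z, δ x z ≤ δ x y + δ y z)
    (hδnonneg : ∀ x y, 0 ≤ δ x y)
    (hδle : ∀ n, ∀ p ∈ v n, δ p.1 p.2 ≤ (1 / 2 : ℝ) ^ n)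
    (hδmax : ∀ ρ : M → M → ℝ, (∀ x, ρ x x = 0) → (∀ x y, ρ x y = ρ y x) →
      (∀ x y z, ρ x z ≤ ρ x y + ρ y z) → (∀ x y, 0 ≤ ρ x y) →
      (∀ n, ∀ p ∈ v n, ρ p.1 p.2 ≤ (1 / 2 : ℝ) ^ n) → ∀ x y, ρ x y ≤ δ x y) :
    ∀ n, 0 < n → ∀ x y : M, δ x y < (1 / 2 : ℝ) ^ n → (x, y) ∈ v (n - 1) := by
  exact FrinkAux.frink_lemma' v hv0 hrefl hsymm hcomp δ hδ0 hδsymm hδtri hδnonneg hδle hδmax
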